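/- Assume P² · s_n > q^n · log q. Then the number of elements b ∈ F_q for which the equation a_1 g_1^{x_1} + ⋯ + a_n g_n^{x_n} = b has no solution with 0 ≤ x_i < s_i for all i is at most q/log q. -/

import Mathlib

/-- The box `X^{n+1}(r) = {0,…,s₁−1} × ⋯ × {0,…,s_n−1} × {0,…,r−1}` of exponent tuples,
where `sᵢ` is the multiplicative order of `g i` and the last coordinate is truncated
at `r`. -/
noncomputable def expBox {F : Type*} [Monoid F] {n : ℕ} (g : Fin (n + 1) → Fˣ) (r : ℕ) :
    Finset (Fin (n + 1) → ℕ) :=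
  Fintype.piFinset fun i => Finset.range (if i = Fin.last n then r else orderOf (g i))

/-- The exponential polynomial `f_b(x) = a₁g₁^{x₁} + ⋯ + a_{n+1}g_{n+1}^{x_{n+1}} − b`. -/
noncomputable def expPoly {F : Type*} [Field F] {n : ℕ} (a g : Fin (n + 1) → Fˣ) (b : F)
    (x : Fin (n + 1) → ℕ) : F :=
  (∑ i, (a i : F) * (g i : F) ^ x i) - b

/-- `S_{f_b}(r)`: the set of zeros of `f_b` in the box `X^{n+1}(r)`. -/
noncomputable def solSet {F : Type*} [Field F] [DecidableEq F] {n : ℕ} (a g : Fin (n + 1) → Fˣ)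
    (b : F) (r : ℕ) : Finset (Fin (n + 1) → ℕ) :=
  (expBox g r).filter fun x => expPoly a g b x = 0

/-- `N_{f_b}(r) = #S_{f_b}(r)`. -/
noncomputable def solCount {F : Type*} [Field F] [DecidableEq F] {n : ℕ} (a g : Fin (n + 1) → Fˣ)
    (b : F) (r : ℕ) : ℕ :=
  (solSet a g b r).card

/-- `P = ∏_{l=1}^{n} s_l`, the product of the multiplicative orders of all the `g i`
except the last one. -/
noncomputable def ordProd {F : Type*} [Monoid F] {n : ℕ} (g : Fin (n + 1) → Fˣ) : ℕ :=
  ∏ i : Fin n, orderOf (g i.castSucc)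


set_option linter.unusedSectionVars false

open Finset

private lemma addChar_map_finsum {A M : Type*} [AddCommGroup A] [CommMonoid M]
    (ψ : AddChar A M) {ι : Type*} (s : Finset ι) (f : ι → A) :
    ψ (∑ i ∈ s, f i) = ∏ i ∈ s, ψ (f i) := by
  classical
  induction s using Finset.induction_on with
  | empty => simp
  | insert _ _ hx ih => rw [Finset.sum_insert hx, Finset.prod_insert hx, AddChar.map_add_eq_mul, ih]

section Char

variable {F : Type*} [Field F] [Fintype F] [DecidableEq F] {ψ : AddChar F ℂ}

private lemma conj_psi (c : F) : (starRingEnd ℂ) (ψ c) = ψ (-c) := by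
  have hR : 0 < ringChar F := Nat.pos_of_ne_zero (CharP.ringChar_ne_zero_of_finite F)
  rw [AddChar.starComp_apply hR, AddChar.inv_apply]

private lemma sum_normSq_eq (hψ : ψ.IsPrimitive) {ι : Type*} [DecidableEq ι]
    (X : Finset ι) (v : ι → F) :
    ∑ b : F, Complex.normSq (∑ x ∈ X, ψ (b * v x)) =
      (Fintype.card F : ℝ) * (((X ×ˢ X).filter fun p => v p.1 = v p.2).card : ℝ) := by
  have key : ∑ b : F, (∑ x ∈ X, ψ (b * v x)) * (starRingEnd ℂ) (∑ x ∈ X, ψ (b * v x)) =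
      ((Fintype.card F : ℂ)) * (((X ×ˢ X).filter fun p => v p.1 = v p.2).card : ℂ) := by
    have hconj : ∀ b : F, (starRingEnd ℂ) (∑ x ∈ X, ψ (b * v x)) =
        ∑ y ∈ X, ψ (-(b * v y)) := by
      intro b
      rw [map_sum]
      exact Finset.sum_congr rfl fun y _ => conj_psi _
    calc ∑ b : F, (∑ x ∈ X, ψ (b * v x)) * (starRingEnd ℂ) (∑ x ∈ X, ψ (b * v x))
        = ∑ b : F, ∑ x ∈ X, ∑ y ∈ X, ψ (b * (v x - v y)) := by
          refine Finset.sum_congr rfl fun b _ => ?_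
          rw [hconj b, Finset.sum_mul_sum]
          refine Finset.sum_congr rfl fun x _ => Finset.sum_congr rfl fun y _ => ?_
          rw [← AddChar.map_add_eq_mul]
          congr 1
          ring
      _ = ∑ x ∈ X, ∑ y ∈ X, ∑ b : F, ψ (b * (v x - v y)) := by
          rw [Finset.sum_comm]
          exact Finset.sum_congr rfl fun x _ => Finset.sum_comm
      _ = ∑ x ∈ X, ∑ y ∈ X, (if v x - v y = 0 then (Fintype.card F : ℂ) else 0) := by
          refine Finset.sum_congr rfl fun x _ => Finset.sum_congr rfl fun y _ => ?_
          rw [AddChar.sum_mulShift _ hψ, apply_ite (Nat.cast : ℕ → ℂ)]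
          simp
      _ = ∑ p ∈ X ×ˢ X, (if v p.1 = v p.2 then (Fintype.card F : ℂ) else 0) := by
          rw [Finset.sum_product]
          simp_rw [sub_eq_zero]
      _ = (Fintype.card F : ℂ) * (((X ×ˢ X).filter fun p => v p.1 = v p.2).card : ℂ) := by
          rw [← Finset.sum_filter, Finset.sum_const, nsmul_eq_mul, mul_comm]
  have hns : ∀ b : F, (∑ x ∈ X, ψ (b * v x)) * (starRingEnd ℂ) (∑ x ∈ X, ψ (b * v x)) =
      ((Complex.normSq (∑ x ∈ X, ψ (b * v x)) : ℝ) : ℂ) := fun b => Complex.mul_conj _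
  simp_rw [hns] at key
  exact_mod_cast key


variable (ψ) in
private noncomputable def Wc (h : Fˣ) (c : F) : ℂ :=
  ∑ x ∈ Finset.range (orderOf h), ψ (c * (h : F) ^ x)

private lemma hpow_inj (h : Fˣ) {x y : ℕ} (hx : x < orderOf h) (hy : y < orderOf h)
    (e : (h : F) ^ x = (h : F) ^ y) : x = y := by
  have e' : h ^ x = h ^ y := Units.ext (by push_cast; exact e)
  exact pow_injOn_Iio_orderOf hx hy e'

private lemma Wc_mul (h : Fˣ) (c : F) : Wc ψ h (c * h) = Wc ψ h c := by
  set s := orderOf h with hsdef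
  set e : ℕ → ℂ := fun x => ψ (c * (h : F) ^ x) with he
  have h1 : Wc ψ h (c * h) = ∑ x ∈ Finset.range s, e (x + 1) := by
    refine Finset.sum_congr rfl fun x _ => ?_
    simp only [he]
    congr 1
    ring
  have h2 : e s = e 0 := by
    simp only [he]
    congr 1
    have : (h : F) ^ s = ((h ^ s : Fˣ) : F) := by push_cast; ring
    rw [this, hsdef, pow_orderOf_eq_one]
    simp
  have h3 := Finset.sum_range_succ' e s
  have h4 := Finset.sum_range_succ e s
  have : (∑ x ∈ Finset.range s, e (x + 1)) + e 0 = (∑ x ∈ Finset.range s, e x) + e 0 := by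
    rw [← h3, h4, h2]
  rw [h1]
  exact add_right_cancel this

private lemma Wc_mul_pow (h : Fˣ) (c : F) (k : ℕ) : Wc ψ h (c * (h : F) ^ k) = Wc ψ h c := by
  induction k with
  | zero => simp
  | succ k ih =>
      have : c * (h : F) ^ (k + 1) = (c * (h : F) ^ k) * h := by ring
      rw [this, Wc_mul, ih]

private lemma sum_normSq_W (hψ : ψ.IsPrimitive) (h : Fˣ) :
    ∑ c : F, Complex.normSq (Wc ψ h c) = (Fintype.card F : ℝ) * (orderOf h : ℝ) := by
  have key := sum_normSq_eq hψ (Finset.range (orderOf h)) (fun x => (h : F) ^ x)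
  have hdiag : ((Finset.range (orderOf h)) ×ˢ (Finset.range (orderOf h))).filter
      (fun p => (h : F) ^ p.1 = (h : F) ^ p.2) = (Finset.range (orderOf h)).diag := by
    ext ⟨x, y⟩
    simp only [Finset.mem_filter, Finset.mem_product, Finset.mem_diag, Finset.mem_range]
    constructor
    · rintro ⟨⟨hx, hy⟩, hxy⟩
      exact ⟨hx, hpow_inj h hx hy hxy⟩
    · rintro ⟨hx, rfl⟩
      exact ⟨⟨hx, hx⟩, rfl⟩
  rw [hdiag, Finset.diag_card, Finset.card_range] at key
  exact key

private lemma normSq_W_le (hψ : ψ.IsPrimitive) (h : Fˣ) {u : F} (hu : u ≠ 0) :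
    Complex.normSq (Wc ψ h u) ≤ (Fintype.card F : ℝ) := by
  set s := orderOf h with hsdef
  have hs : 0 < s := orderOf_pos h
  have hinv : ∀ k, Wc ψ h (u * (h : F) ^ k) = Wc ψ h u := Wc_mul_pow h u
  have hinj : ∀ k ∈ Finset.range s, ∀ l ∈ Finset.range s,
      u * (h : F) ^ k = u * (h : F) ^ l → k = l := by
    intro k hk l hl e
    exact hpow_inj h (Finset.mem_range.1 hk) (Finset.mem_range.1 hl) (mul_left_cancel₀ hu e)
  have step : (s : ℝ) * Complex.normSq (Wc ψ h u)
      = ∑ c ∈ (Finset.range s).image (fun k => u * (h : F) ^ k), Complex.normSq (Wc ψ h c) := by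
    rw [Finset.sum_image hinj]
    simp_rw [hinv]
    rw [Finset.sum_const, Finset.card_range, nsmul_eq_mul]
  have step2 : ∑ c ∈ (Finset.range s).image (fun k => u * (h : F) ^ k),
      Complex.normSq (Wc ψ h c) ≤ ∑ c : F, Complex.normSq (Wc ψ h c) :=
    Finset.sum_le_sum_of_subset_of_nonneg (Finset.subset_univ _)
      (fun _ _ _ => Complex.normSq_nonneg _)
  have := step ▸ step2
  rw [sum_normSq_W hψ h] at this
  have hq : (s : ℝ) * Complex.normSq (Wc ψ h u) ≤ (s : ℝ) * (Fintype.card F : ℝ) := by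
    calc (s : ℝ) * Complex.normSq (Wc ψ h u) ≤ (Fintype.card F : ℝ) * (s : ℝ) := this
    _ = (s : ℝ) * (Fintype.card F : ℝ) := by ring
  exact le_of_mul_le_mul_left hq (by exact_mod_cast hs)

end Char


set_option maxHeartbeats 2000000 in
/-- Assume `P² · s_{n+1} > q^{n+1} · log q`.  Then the number of elements `b ∈ F` for which
the equation `a₁g₁^{x₁} + ⋯ + a_{n+1}g_{n+1}^{x_{n+1}} = b` has no solution with
`0 ≤ xᵢ < sᵢ` for all `i` is at most `q / log q`. -/
theorem statement8 (p ν : ℕ) (hp : p.Prime) (hν : 1 ≤ ν)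
    (F : Type*) [Field F] [Fintype F] [DecidableEq F]
    (hq : Fintype.card F = p ^ ν)
    (n : ℕ) (hn : 1 ≤ n)
    (a g : Fin (n + 1) → Fˣ)
    (h : (ordProd g : ℝ) ^ 2 * (orderOf (g (Fin.last n)) : ℝ) >
        (Fintype.card F : ℝ) ^ (n + 1) * Real.log (Fintype.card F)) :
    (({b : F | ¬ ∃ x : Fin (n + 1) → ℕ, (∀ i, x i < orderOf (g i)) ∧
        ∑ i, (a i : F) * (g i : F) ^ x i = b}.ncard : ℝ)) ≤
      (Fintype.card F : ℝ) / Real.log (Fintype.card F) := by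
  classical
  set q := Fintype.card F with hqdef
  have hq2 : 1 < q := Fintype.one_lt_card
  have hQ1 : (1 : ℝ) < (q : ℝ) := by exact_mod_cast hq2
  have hQ0 : (0 : ℝ) < (q : ℝ) := by linarith
  have hlog : 0 < Real.log q := Real.log_pos hQ1
  set ψ : AddChar F ℂ := AddChar.FiniteField.primitiveChar_to_Complex F with hψdef
  have hψ : ψ.IsPrimitive := AddChar.FiniteField.primitiveChar_to_Complex_isPrimitive F
  set s := orderOf (g (Fin.last n)) with hsdef
  have hs : 0 < s := orderOf_pos _
  set X : Finset (Fin (n + 1) → ℕ) := Fintype.piFinset fun i => Finset.range (orderOf (g i))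
    with hXdef
  set v : (Fin (n + 1) → ℕ) → F := fun x => ∑ i, (a i : F) * (g i : F) ^ x i with hvdef
  -- cardinality of the box
  have hXcard : X.card = ordProd g * s := by
    rw [hXdef, Fintype.card_piFinset]
    simp_rw [Finset.card_range]
    rw [Fin.prod_univ_castSucc]
    rfl
  -- the character sums
  set T : F → ℂ := fun b => ∑ x ∈ X, ψ (b * v x) with hTdef
  set Ti : Fin (n + 1) → F → ℂ :=
    fun i b => ∑ t ∈ Finset.range (orderOf (g i)), ψ ((b * a i) * (g i : F) ^ t) with hTidef
  have hTiW : ∀ i b, Ti i b = Wc ψ (g i) (b * a i) := fun i b => rfl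
  have hT : ∀ b, T b = ∏ i, Ti i b := by
    intro b
    rw [hTdef, hTidef]
    simp only
    rw [Finset.prod_univ_sum]
    refine Finset.sum_congr rfl fun x _ => ?_
    rw [show b * v x = ∑ i, (b * a i) * (g i : F) ^ x i by
      rw [hvdef]; simp only; rw [Finset.mul_sum]; exact Finset.sum_congr rfl fun i _ => by ring]
    exact addChar_map_finsum ψ _ _
  set M := ((X ×ˢ X).filter fun p => v p.1 = v p.2).card with hMdef
  have hM : ∑ b : F, Complex.normSq (T b) = (q : ℝ) * (M : ℝ) := sum_normSq_eq hψ X v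
  have hT0 : Complex.normSq (T 0) = (X.card : ℝ) ^ 2 := by
    have : T 0 = (X.card : ℂ) := by
      rw [hTdef]; simp
    rw [this, Complex.normSq_natCast]
    push_cast
    ring
  -- the main bound on q * M
  have hMbound : (q : ℝ) * (M : ℝ) ≤ (X.card : ℝ) ^ 2 + (q : ℝ) ^ (n + 1) * (s : ℝ) := by
    rw [← hM]
    rw [← Finset.sum_erase_add _ _ (Finset.mem_univ (0 : F)), hT0]
    have hTlast_sum : ∑ b : F, Complex.normSq (Ti (Fin.last n) b) = (q : ℝ) * (s : ℝ) := by
      have base := sum_normSq_W hψ (g (Fin.last n))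
      rw [← hsdef] at base
      rw [← base]
      refine Fintype.sum_equiv (Equiv.mulRight₀ ((a (Fin.last n) : F)) (Units.ne_zero _)) _ _
        (fun b => ?_)
      rw [hTiW]
      rfl
    have hstep : ∑ b ∈ Finset.univ.erase (0 : F), Complex.normSq (T b)
        ≤ (q : ℝ) ^ n * ((q : ℝ) * (s : ℝ)) := by
      calc ∑ b ∈ Finset.univ.erase (0 : F), Complex.normSq (T b)
          ≤ ∑ b ∈ Finset.univ.erase (0 : F), (q : ℝ) ^ n * Complex.normSq (Ti (Fin.last n) b) := by
            refine Finset.sum_le_sum fun b hb => ?_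
            have hb0 : b ≠ 0 := Finset.ne_of_mem_erase hb
            rw [hT b, map_prod, Fin.prod_univ_castSucc]
            refine mul_le_mul_of_nonneg_right ?_ (Complex.normSq_nonneg _)
            calc ∏ i : Fin n, Complex.normSq (Ti i.castSucc b)
                ≤ ∏ _i : Fin n, (q : ℝ) := by
                  refine Finset.prod_le_prod (fun i _ => Complex.normSq_nonneg _) fun i _ => ?_
                  rw [hTiW]
                  exact normSq_W_le hψ _ (mul_ne_zero hb0 (Units.ne_zero _))
              _ = (q : ℝ) ^ n := by rw [Finset.prod_const, Finset.card_univ, Fintype.card_fin]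
        _ = (q : ℝ) ^ n * ∑ b ∈ Finset.univ.erase (0 : F), Complex.normSq (Ti (Fin.last n) b) := by
            rw [Finset.mul_sum]
        _ ≤ (q : ℝ) ^ n * ((q : ℝ) * (s : ℝ)) := by
            refine mul_le_mul_of_nonneg_left ?_ (by positivity)
            rw [← hTlast_sum]
            exact Finset.sum_le_sum_of_subset_of_nonneg (Finset.subset_univ _)
              (fun _ _ _ => Complex.normSq_nonneg _)
    calc (∑ b ∈ Finset.univ.erase (0 : F), Complex.normSq (T b)) + (X.card : ℝ) ^ 2
        ≤ (q : ℝ) ^ n * ((q : ℝ) * (s : ℝ)) + (X.card : ℝ) ^ 2 := by linarith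
      _ = (X.card : ℝ) ^ 2 + (q : ℝ) ^ (n + 1) * (s : ℝ) := by ring
  -- fibers and Cauchy–Schwarz
  set G := X.image v with hGdef
  have hfib : X.card = ∑ b ∈ G, (X.filter fun x => v x = b).card :=
    Finset.card_eq_sum_card_fiberwise fun x hx => Finset.mem_image_of_mem v hx
  have hM2 : M = ∑ b ∈ G, ((X.filter fun x => v x = b).card) ^ 2 := by
    have key : M = ∑ b ∈ G,
        (((X ×ˢ X).filter fun p => v p.1 = v p.2).filter fun p => v p.1 = b).card := by
      refine Finset.card_eq_sum_card_fiberwise fun p hp => ?_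
      rw [Finset.mem_coe, Finset.mem_filter, Finset.mem_product] at hp
      exact Finset.mem_image_of_mem v hp.1.1
    rw [key]
    refine Finset.sum_congr rfl fun b hb => ?_
    have : (((X ×ˢ X).filter fun p => v p.1 = v p.2).filter fun p => v p.1 = b)
        = (X.filter fun x => v x = b) ×ˢ (X.filter fun x => v x = b) := by
      ext ⟨x, y⟩
      simp only [Finset.mem_filter, Finset.mem_product]
      constructor
      · rintro ⟨⟨⟨hx, hy⟩, hxy⟩, hxb⟩
        exact ⟨⟨hx, hxb⟩, hy, hxb ▸ hxy.symm ▸ hxy ▸ rfl⟩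
      · rintro ⟨⟨hx, hxb⟩, hy, hyb⟩
        exact ⟨⟨⟨hx, hy⟩, by rw [hxb, hyb]⟩, hxb⟩
    rw [this, Finset.card_product, sq]
  have hCS : ((X.card : ℝ)) ^ 2 ≤ (G.card : ℝ) * (M : ℝ) := by
    have h1 : ((X.card : ℝ)) = ∑ b ∈ G, ((X.filter fun x => v x = b).card : ℝ) := by
      exact_mod_cast hfib
    have h2 : ((M : ℝ)) = ∑ b ∈ G, ((X.filter fun x => v x = b).card : ℝ) ^ 2 := by
      exact_mod_cast hM2
    rw [h1, h2]
    exact sq_sum_le_card_mul_sum_sq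
  -- identify the bad set
  have hbadset : {b : F | ¬ ∃ x : Fin (n + 1) → ℕ, (∀ i, x i < orderOf (g i)) ∧
      ∑ i, (a i : F) * (g i : F) ^ x i = b} = ↑(Finset.univ \ G) := by
    ext b
    simp only [Set.mem_setOf_eq, Finset.coe_sdiff, Set.mem_diff, Finset.coe_univ,
      Set.mem_univ, true_and, Finset.mem_coe, hGdef, Finset.mem_image, hXdef,
      Fintype.mem_piFinset, Finset.mem_range, not_exists, hvdef]
  have hGcard : (G.card : ℝ) ≤ (q : ℝ) := by
    exact_mod_cast Finset.card_le_univ G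
  have hncard : ({b : F | ¬ ∃ x : Fin (n + 1) → ℕ, (∀ i, x i < orderOf (g i)) ∧
      ∑ i, (a i : F) * (g i : F) ^ x i = b}.ncard : ℝ) = (q : ℝ) - (G.card : ℝ) := by
    rw [hbadset, Set.ncard_coe_finset, Finset.card_sdiff_of_subset (Finset.subset_univ G),
      Finset.card_univ, Nat.cast_sub (Finset.card_le_univ G)]
  rw [hncard]
  -- final arithmetic
  have hXv : (X.card : ℝ) = (ordProd g : ℝ) * (s : ℝ) := by rw [hXcard]; push_cast; ring
  have hS1 : (1 : ℝ) ≤ (s : ℝ) := by exact_mod_cast hs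
  have hf5 : (q : ℝ) ^ (n + 1) * (s : ℝ) * Real.log q ≤ (X.card : ℝ) ^ 2 := by
    have := mul_le_mul_of_nonneg_right (le_of_lt h) (le_trans zero_le_one hS1)
    calc (q : ℝ) ^ (n + 1) * (s : ℝ) * Real.log q
        = ((q : ℝ) ^ (n + 1) * Real.log q) * (s : ℝ) := by ring
      _ ≤ ((ordProd g : ℝ) ^ 2 * (s : ℝ)) * (s : ℝ) := this
      _ = (X.card : ℝ) ^ 2 := by rw [hXv]; ring
  set D : ℝ := (X.card : ℝ) ^ 2 + (q : ℝ) ^ (n + 1) * (s : ℝ) with hDdef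
  have hD0 : 0 < D := by
    have : (0:ℝ) < (q : ℝ) ^ (n + 1) * (s : ℝ) := by positivity
    nlinarith [sq_nonneg (X.card : ℝ)]
  have hkey : (q : ℝ) * (X.card : ℝ) ^ 2 ≤ (G.card : ℝ) * D := by
    calc (q : ℝ) * (X.card : ℝ) ^ 2 ≤ (q : ℝ) * ((G.card : ℝ) * (M : ℝ)) := by
          exact mul_le_mul_of_nonneg_left hCS (le_of_lt hQ0)
      _ = (G.card : ℝ) * ((q : ℝ) * (M : ℝ)) := by ring
      _ ≤ (G.card : ℝ) * D :=
          mul_le_mul_of_nonneg_left hMbound (Nat.cast_nonneg _)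
  rw [le_div_iff₀ hlog]
  nlinarith [hkey, hf5, hD0, hlog, hQ0, mul_nonneg (mul_nonneg hQ0.le hlog.le) hD0.le,
    mul_le_mul_of_nonneg_left hf5 hQ0.le]
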